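/- arXiv:1512.08384 — 2 statements merged into one kernel-verified Lean document; each statement's English description precedes it below -/
import Mathlib

section
/- Let γ be an automorphism of a finitely generated free ℤ-module H preserving a nondegenerate bilinear form, and suppose γ ≡ Id mod m for some integer m ≥ 3. If γ has finite order, then γ = Id. -/
open Finset


private lemma serre_key_int {p q : ℕ} (hp : p.Prime) (hq : q.Prime) {N : ℕ} (hN : 1 <= N)
    (hN2 : q = 2 -> 2 <= N) {w : ℤ} (hw : ¬ (q : ℤ) ∣ w) (a : ℕ → ℤ)
    (hsum : ∑ i ∈ range p, (p.choose (i + 1) : ℤ) * w ^ (i + 1) * (q : ℤ) ^ (N * (i + 1)) * a (i + 1) = 0) :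
    (q : ℤ) ∣ a 1 := by
  obtain ⟨p', rfl⟩ : ∃ p', p = p' + 1 := ⟨p - 1, (Nat.succ_pred_eq_of_pos hp.pos).symm⟩
  rw [Finset.sum_range_succ'] at hsum
  have h1 : ((p' + 1 : ℕ) : ℤ) * w * (q : ℤ) ^ N * a 1 =
      - ∑ i ∈ range p', ((p' + 1).choose (i + 1 + 1) : ℤ) * w ^ (i + 1 + 1) *
        (q : ℤ) ^ (N * (i + 1 + 1)) * a (i + 1 + 1) := by
    have := hsum
    simp only [zero_add, Nat.choose_one_right, pow_one, mul_one, Nat.mul_one] at this ⊢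
    linarith [this]
  have hqz : (q : ℤ) ≠ 0 := Int.natCast_ne_zero.mpr hq.pos.ne'
  have hqp : Prime (q : ℤ) := Nat.prime_iff_prime_int.mp hq
  by_cases hpq : p' + 1 = q
  · -- p = q case: each remaining term divisible by q^(N+2)
    have hpq' : ((p' + 1 : ℕ) : ℤ) = (q : ℤ) := by exact_mod_cast hpq
    have hdvd : (q : ℤ) ^ (N + 2) ∣ ((p' + 1 : ℕ) : ℤ) * w * (q : ℤ) ^ N * a 1 := by
      rw [h1, dvd_neg]
      apply Finset.dvd_sum
      intro i hi
      simp only [mem_range] at hi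
      by_cases hip : i + 1 + 1 < p' + 1
      · obtain ⟨t, ht⟩ := Nat.Prime.dvd_choose_self hp (Nat.succ_ne_zero _) hip
        have hle : N + 2 ≤ 1 + N * (i + 1 + 1) := by
          have := Nat.mul_le_mul_left N (show 2 ≤ i + 1 + 1 by omega)
          omega
        refine dvd_trans (pow_dvd_pow (q : ℤ) hle) ?_
        refine ⟨(t : ℤ) * w ^ (i + 1 + 1) * a (i + 1 + 1), ?_⟩
        have ht' : ((p' + 1).choose (i + 1 + 1) : ℤ) = ((p' + 1 : ℕ) : ℤ) * (t : ℤ) := by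
          exact_mod_cast congrArg (Nat.cast : ℕ → ℤ) ht
        rw [ht', hpq', pow_add, pow_one]
        ring
      · have hip' : i + 1 + 1 = p' + 1 := by omega
        have h2 : N + 2 ≤ N * (i + 1 + 1) := by
          rw [hip']
          rcases Nat.lt_or_ge (p' + 1) 3 with h3 | h3
          · have hp2 : p' + 1 = 2 := by have := hp.two_le; omega
            have hq2 : q = 2 := by omega
            have := hN2 hq2
            rw [hp2]; omega
          · have : N * 3 ≤ N * (p' + 1) := Nat.mul_le_mul_left N h3
            omega
        obtain ⟨s, hs⟩ := pow_dvd_pow (q : ℤ) h2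
        exact ⟨((p' + 1).choose (i + 1 + 1) : ℤ) * w ^ (i + 1 + 1) * s * a (i + 1 + 1),
          by rw [hs]; ring⟩
    rw [hpq'] at hdvd
    have h3 : (q : ℤ) ^ (N + 1) * (q : ℤ) ∣ (q : ℤ) ^ (N + 1) * (w * a 1) := by
      have e1 : (q : ℤ) ^ (N + 1) * (q : ℤ) = (q : ℤ) ^ (N + 2) := by ring
      have e2 : (q : ℤ) * w * (q : ℤ) ^ N * a 1 = (q : ℤ) ^ (N + 1) * (w * a 1) := by ring
      rw [e1, ← e2]; exact hdvd
    have h4 : (q : ℤ) ∣ w * a 1 :=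
      (mul_dvd_mul_iff_left (pow_ne_zero (N + 1) hqz)).mp h3
    rcases hqp.dvd_mul.mp h4 with h | h
    · exact absurd h hw
    · exact h
  · -- p ≠ q case
    have hdvd : (q : ℤ) ^ (N + 1) ∣ ((p' + 1 : ℕ) : ℤ) * w * (q : ℤ) ^ N * a 1 := by
      rw [h1, dvd_neg]
      apply Finset.dvd_sum
      intro i hi
      have h2 : N + 1 ≤ N * (i + 1 + 1) := by
        have := Nat.mul_le_mul_left N (show 2 ≤ i + 1 + 1 by omega)
        omega
      obtain ⟨s, hs⟩ := pow_dvd_pow (q : ℤ) h2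
      exact ⟨((p' + 1).choose (i + 1 + 1) : ℤ) * w ^ (i + 1 + 1) * s * a (i + 1 + 1),
        by rw [hs]; ring⟩
    have h3 : (q : ℤ) ^ N * (q : ℤ) ∣ (q : ℤ) ^ N * (((p' + 1 : ℕ) : ℤ) * w * a 1) := by
      have e1 : (q : ℤ) ^ N * (q : ℤ) = (q : ℤ) ^ (N + 1) := by ring
      have e2 : ((p' + 1 : ℕ) : ℤ) * w * (q : ℤ) ^ N * a 1 =
          (q : ℤ) ^ N * (((p' + 1 : ℕ) : ℤ) * w * a 1) := by ring
      rw [e1, ← e2]; exact hdvd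
    have h4 : (q : ℤ) ∣ ((p' + 1 : ℕ) : ℤ) * w * a 1 :=
      (mul_dvd_mul_iff_left (pow_ne_zero N hqz)).mp h3
    rcases hqp.dvd_mul.mp h4 with h | h
    · rcases hqp.dvd_mul.mp h with h' | h'
      · exfalso
        have : q ∣ p' + 1 := Int.natCast_dvd_natCast.mp h'
        exact hpq ((Nat.prime_dvd_prime_iff_eq hq hp).mp this).symm
      · exact absurd h' hw
    · exact h


private lemma serre_nat_split (q : ℕ) (hq : q.Prime) {n : ℕ} (hn : n ≠ 0) :
    ∃ c n', n = q ^ c * n' ∧ ¬ q ∣ n' ∧ (q ∣ n → 1 ≤ c) := by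
  refine ⟨n.factorization q, n / q ^ n.factorization q,
    (Nat.ordProj_mul_ordCompl_eq_self n q).symm,
    Nat.not_dvd_ordCompl hq hn, fun hdvd => Nat.Prime.factorization_pos_of_dvd hq hn hdvd⟩

private lemma serre_exists_qe (m : ℤ) (hm : 3 ≤ m) :
    ∃ (q e : ℕ) (m' : ℤ), q.Prime ∧ 1 ≤ e ∧ (q = 2 → 2 ≤ e) ∧
      m = (q : ℤ) ^ e * m' ∧ ¬ (q : ℤ) ∣ m' := by
  set n := m.toNat with hn
  have hmn : m = (n : ℤ) := by omega
  have hn3 : 3 ≤ n := by omega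
  obtain ⟨k, b, hb, hnb⟩ := Nat.exists_eq_two_pow_mul_odd (show n ≠ 0 by omega)
  by_cases hb1 : b = 1
  · -- n = 2 ^ k, k ≥ 2
    subst hb1
    rw [mul_one] at hnb
    have hk2 : 2 ≤ k := by
      by_contra h
      interval_cases k <;> omega
    refine ⟨2, k, 1, Nat.prime_two, by omega, fun _ => hk2, ?_, ?_⟩
    · rw [hmn, hnb]; push_cast; ring
    · intro h
      have : (2 : ℤ) ∣ 1 := h
      omega
  · -- b has an odd prime factor q = b.minFac
    have hb2 : 2 ≤ b := by
      rcases Nat.eq_zero_or_pos b with h | h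
      · subst h; simp at hnb; omega
      · omega
    set q := b.minFac with hqdef
    have hqp : q.Prime := Nat.minFac_prime hb1
    have hq2 : q ≠ 2 := by
      intro h
      have : 2 ∣ b := h ▸ Nat.minFac_dvd b
      rcases hb with ⟨j, hj⟩
      omega
    have hqn : q ∣ n := hnb ▸ Dvd.dvd.mul_left (Nat.minFac_dvd b) _
    obtain ⟨c, n', hsplit, hnd, hc⟩ := serre_nat_split q hqp (show n ≠ 0 by omega)
    refine ⟨q, c, (n' : ℤ), hqp, hc hqn, fun h => absurd h hq2, ?_, ?_⟩
    · rw [hmn, hsplit]; push_cast; ring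
    · intro h
      exact hnd (Int.natCast_dvd_natCast.mp h)


private lemma serre_int_split (q : ℕ) (hq : q.Prime) {g : ℤ} (hg : g ≠ 0) :
    ∃ (c : ℕ) (g' : ℤ), g = (q : ℤ) ^ c * g' ∧ ¬ (q : ℤ) ∣ g' := by
  obtain ⟨c, n', h1, h2, _⟩ : ∃ c n', g.natAbs = q ^ c * n' ∧ ¬ q ∣ n' ∧ (q ∣ g.natAbs → 1 ≤ c) := by
    refine ⟨g.natAbs.factorization q, g.natAbs / q ^ g.natAbs.factorization q,
      (Nat.ordProj_mul_ordCompl_eq_self _ q).symm,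
      Nat.not_dvd_ordCompl hq (Int.natAbs_ne_zero.mpr hg),
      fun hdvd => Nat.Prime.factorization_pos_of_dvd hq (Int.natAbs_ne_zero.mpr hg) hdvd⟩
  rcases Int.natAbs_eq g with h | h
  · exact ⟨c, (n' : ℤ), by rw [h, h1]; push_cast; ring,
      fun hd => h2 (Int.natCast_dvd_natCast.mp hd)⟩
  · exact ⟨c, -(n' : ℤ), by rw [h, h1]; push_cast; ring,
      fun hd => h2 (Int.natCast_dvd_natCast.mp (dvd_neg.mp hd))⟩

set_option maxHeartbeats 1000000 in
private lemma serre_prime_step {H : Type*} [AddCommGroup H] [Module ℤ H]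
    [Module.Free ℤ H] [Module.Finite ℤ H]
    (m : ℤ) (hm : 3 ≤ m) (γ δ : Module.End ℤ H) (hcong : γ - 1 = m • δ)
    (p : ℕ) (hp : p.Prime) (hord : γ ^ p = 1) : γ = 1 := by
  by_contra hne
  have hδ : δ ≠ 0 := by
    intro h
    rw [h, show m • (0 : Module.End ℤ H) = 0 from LinearMap.ext fun x => by simp, sub_eq_zero] at hcong
    exact hne hcong
  classical
  set b := Module.Free.chooseBasis ℤ H with hb
  set f := LinearMap.toMatrixAlgEquiv b with hf
  set A : Matrix _ _ ℤ := f δ with hA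
  have hAne : A ≠ 0 := fun h => hδ ((LinearMap.toMatrix b b).injective (by rw [map_zero]; exact h))
  -- binomial expansion at the level of endomorphisms
  have hγeq : γ = m • δ + 1 := by
    have := hcong
    rw [sub_eq_iff_eq_add] at this
    exact this
  have hexp : ∑ i ∈ range p, ((m • δ) ^ (i + 1)) * ((p.choose (i + 1) : ℕ) : Module.End ℤ H) = 0 := by
    have h1 : (m • δ + 1) ^ p =
        ∑ i ∈ range (p + 1), (m • δ) ^ i * (1 : Module.End ℤ H) ^ (p - i) * (p.choose i : ℕ) :=
      (Commute.one_right (m • δ)).add_pow p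
    simp only [one_pow, mul_one] at h1
    rw [← hγeq, hord, Finset.sum_range_succ'] at h1
    simp only [pow_zero, Nat.choose_zero_right, Nat.cast_one, one_mul] at h1
    have := h1.symm
    rw [add_eq_right] at this
    exact this
  -- rewrite as an integer-scalar combination
  have hexp2 : ∑ i ∈ range p, (((p.choose (i + 1) : ℤ)) * m ^ (i + 1)) • (δ ^ (i + 1)) = 0 := by
    rw [← hexp]
    apply Finset.sum_congr rfl
    intro i _
    have hmul : ∀ (x : Module.End ℤ H) (n : ℕ), x * (n : Module.End ℤ H) = (n : ℤ) • x :=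
      fun x n => by rw [Nat.cast_smul_eq_nsmul, nsmul_eq_mul, (Nat.cast_commute n x).eq]
    rw [smul_pow, hmul, mul_smul]
  -- transport to matrices
  have hexp3 : ∑ i ∈ range p, (((p.choose (i + 1) : ℤ)) * m ^ (i + 1)) • (A ^ (i + 1)) = 0 := by
    have := congrArg f hexp2
    rw [map_sum, map_zero] at this
    rw [← this]
    apply Finset.sum_congr rfl
    intro i _
    rw [zsmul_eq_mul, zsmul_eq_mul, map_mul, map_intCast, map_pow]
  -- gcd decomposition of A
  set g : ℤ := Finset.gcd Finset.univ
      (fun x : Module.Free.ChooseBasisIndex ℤ H × Module.Free.ChooseBasisIndex ℤ H =>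
        A x.1 x.2) with hg
  have hgdvd : ∀ j l, g ∣ A j l := fun j l => Finset.gcd_dvd (Finset.mem_univ (j, l))
  have hgne : g ≠ 0 := by
    intro h
    apply hAne
    ext j l
    exact Finset.gcd_eq_zero_iff.mp (hg ▸ h) (j, l) (Finset.mem_univ _)
  set A₁ : Matrix _ _ ℤ := Matrix.of (fun j l => A j l / g) with hA₁
  have hAg : A = g • A₁ := by
    ext j l
    simp only [hA₁, Matrix.smul_apply, Matrix.of_apply, smul_eq_mul]
    exact (Int.mul_ediv_cancel' (hgdvd j l)).symm
  obtain ⟨q, e, m', hqp, he, he2, hmeq, hm'⟩ := serre_exists_qe m hm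
  obtain ⟨c, g', hgeq, hg'⟩ := serre_int_split q hqp hgne
  have hentry : ∃ j l, ¬ (q : ℤ) ∣ A₁ j l := by
    by_contra h
    push_neg at h
    have hdg : g * q ∣ g := by
      apply Finset.dvd_gcd
      intro x _
      obtain ⟨t, ht⟩ := h x.1 x.2
      refine ⟨t, ?_⟩
      have := congrFun (congrFun hAg x.1) x.2
      rw [this, Matrix.smul_apply, smul_eq_mul, ht]
      ring
    have hq1 : (q : ℤ) ∣ 1 := by
      have : g * q ∣ g * 1 := by rwa [mul_one]
      exact (mul_dvd_mul_iff_left hgne).mp this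
    have := Int.le_of_dvd one_pos hq1
    have := hqp.two_le
    omega
  obtain ⟨j, l, hjl⟩ := hentry
  have hqprime : Prime (q : ℤ) := Nat.prime_iff_prime_int.mp hqp
  have hscal : ∑ i ∈ range p, (p.choose (i + 1) : ℤ) * (m' * g') ^ (i + 1) *
      (q : ℤ) ^ ((e + c) * (i + 1)) * ((fun i => (A₁ ^ i) j l) (i + 1)) = 0 := by
    have h0 := congrFun (congrFun hexp3 j) l
    simp only [Matrix.sum_apply, Matrix.smul_apply, Matrix.zero_apply, smul_eq_mul] at h0
    rw [← h0]
    apply Finset.sum_congr rfl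
    intro i _
    simp only []
    have hqq : (q : ℤ) ^ ((e + c) * (i + 1)) = ((q : ℤ) ^ e * (q : ℤ) ^ c) ^ (i + 1) := by
      rw [← pow_add, ← pow_mul]
    rw [hAg, smul_pow, Matrix.smul_apply, smul_eq_mul, hmeq, hgeq, hqq]
    ring
  have hkey := serre_key_int hp hqp (by omega : 1 ≤ e + c)
    (fun h2 => by have := he2 h2; omega)
    (fun hd => by
      rcases hqprime.dvd_mul.mp hd with h | h
      · exact hm' h
      · exact hg' h)
    (fun i => (A₁ ^ i) j l) hscal
  exact hjl (by simpa using hkey)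


private lemma serre_pow_cong {H : Type*} [AddCommGroup H] [Module ℤ H]
    (m : ℤ) (γ δ : Module.End ℤ H) (hcong : γ - 1 = m • δ) :
    ∀ j : ℕ, ∃ δ' : Module.End ℤ H, γ ^ j - 1 = m • δ' := by
  intro j
  induction j with
  | zero => exact ⟨0, by simp⟩
  | succ n ih =>
    obtain ⟨δn, hδn⟩ := ih
    refine ⟨γ ^ n * δ + δn, ?_⟩
    rw [pow_succ]
    simp only [zsmul_eq_mul] at hcong hδn ⊢
    rw [mul_add, ← mul_assoc, (Int.cast_commute m (γ ^ n)).eq, mul_assoc, ← hcong, ← hδn,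
      mul_sub, mul_one]
    abel

private lemma serre_main_aux {H : Type*} [AddCommGroup H] [Module ℤ H]
    [Module.Free ℤ H] [Module.Finite ℤ H]
    (m : ℤ) (hm : 3 ≤ m) (γ δ : Module.End ℤ H) (hcong : γ - 1 = m • δ) :
    ∀ k : ℕ, 0 < k → γ ^ k = 1 → γ = 1 := by
  intro k
  induction k using Nat.strong_induction_on with
  | _ k ih =>
    intro hk hfin
    rcases eq_or_ne k 1 with rfl | hk1
    · rwa [pow_one] at hfin
    · set p := k.minFac with hpdef
      have hpp : p.Prime := Nat.minFac_prime hk1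
      have hpd : p ∣ k := Nat.minFac_dvd k
      set j := k / p with hjdef
      have hkj : j * p = k := Nat.div_mul_cancel hpd
      have hjpos : 0 < j := Nat.div_pos (Nat.le_of_dvd hk hpd) hpp.pos
      have hjlt : j < k := Nat.div_lt_self hk hpp.one_lt
      obtain ⟨δ', hδ'⟩ := serre_pow_cong m γ δ hcong j
      have hstep : γ ^ j = 1 :=
        serre_prime_step m hm (γ ^ j) δ' hδ' p hpp (by rw [← pow_mul, hkj]; exact hfin)
      exact ih j hjlt hjpos hstep

/-- Serre's lemma: a finite-order automorphism `γ` of a finitely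
generated free `ℤ`-module `H` preserving a nondegenerate bilinear form, with
`γ ≡ Id (mod m)` for some integer `m ≥ 3`, is the identity. -/
theorem serre_lemma {H : Type*} [AddCommGroup H] [Module ℤ H]
    [Module.Free ℤ H] [Module.Finite ℤ H]
    (B : H →ₗ[ℤ] H →ₗ[ℤ] ℤ)
    (hB : ∀ x : H, (∀ y : H, B x y = 0) → x = 0)
    (γ : Module.End ℤ H) (hγ : IsUnit γ)
    (hQ : ∀ x y : H, B (γ x) (γ y) = B x y)
    (m : ℤ) (hm : 3 ≤ m) (δ : Module.End ℤ H) (hcong : γ - 1 = m • δ)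
    (k : ℕ) (hk : 0 < k) (hfin : γ ^ k = 1) :
    γ = 1 :=
  serre_main_aux m hm γ δ hcong k hk hfin
end

section
/- Let Φ : H → D be a continuous map from the upper half plane to a topological space D, with a group element γ acting on D such that Φ(z+1) = γ·Φ(z) for all z ∈ H. If additionally γ, viewed as an automorphism of a finitely generated free ℤ-module, satisfies γ ≡ Id mod m for some m ≥ 3 and γ has finite order, then γ = Id and Φ descends along z ↦ exp(2πiz) to a map on the punctured disk with trivial monodromy. -/
open Finset

private lemma matrix_eq_smul_of_dvd {ι : Type*} [Fintype ι] [DecidableEq ι]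
    (c : ℤ) (B : Matrix ι ι ℤ) (h : ∀ i j, c ∣ B i j) : ∃ T, B = c • T := by
  refine ⟨Matrix.of fun i j => B i j / c, ?_⟩
  ext i j
  simp [Int.mul_ediv_cancel' (h i j)]

private lemma binom_expand {ι : Type*} [Fintype ι] [DecidableEq ι]
    (c : ℤ) (M : Matrix ι ι ℤ) (q : ℕ) (hq : 1 ≤ q) :
    (1 + c • M) ^ q = 1 + ((q : ℤ) * c) • M +
      (c^2) • (∑ x ∈ Finset.Ico 2 (q+1), ((q.choose x : ℤ) * c^(x-2)) • M^x) := by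
  have hcomm : Commute (c • M) (1 : Matrix ι ι ℤ) := Commute.one_right _
  rw [add_comm (1 : Matrix ι ι ℤ), hcomm.add_pow]
  have hterm : ∀ x : ℕ, (c • M) ^ x * 1 ^ (q - x) * (q.choose x : Matrix ι ι ℤ)
      = ((q.choose x : ℤ) * c ^ x) • M ^ x := by
    intro x
    rw [one_pow, mul_one, smul_pow]
    have h : ((q.choose x : ℕ) : Matrix ι ι ℤ)
        = ((q.choose x : ℤ) : ℤ) • (1 : Matrix ι ι ℤ) := by simp
    rw [h, mul_smul_comm, mul_one, smul_smul, mul_comm]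
  rw [Finset.sum_congr rfl fun x _ => hterm x]
  rw [Finset.range_eq_Ico, ← Finset.sum_Ico_consecutive _ (Nat.zero_le 2) (by omega : 2 ≤ q + 1)]
  have h01 : ∑ x ∈ Finset.Ico 0 2, ((q.choose x : ℤ) * c ^ x) • M ^ x
      = 1 + ((q : ℤ) * c) • M := by
    rw [show Finset.Ico 0 2 = {0, 1} by rfl]
    simp [Finset.sum_insert, pow_one]
  rw [h01, Finset.smul_sum]
  congr 1
  refine Finset.sum_congr rfl fun x hx => ?_
  rw [smul_smul]
  congr 1
  have hx2 : 2 ≤ x := (Finset.mem_Ico.mp hx).1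
  rw [mul_left_comm, ← pow_add]
  congr 2
  omega

private lemma serre_step {ι : Type*} [Fintype ι] [DecidableEq ι] {p : ℕ} (hp : p.Prime) :
    ∀ k : ℕ, 0 < k → ∀ a : ℕ, 1 ≤ a → (p = 2 → 2 ≤ a) →
      ∀ M : Matrix ι ι ℤ, (1 + ((p:ℤ)^a) • M) ^ k = 1 → ∀ i j, (p:ℤ) ∣ M i j := by
  intro k
  induction k using Nat.strong_induction_on with
  | _ k IH =>
  intro hk a ha ha2 M hpow i j
  set c : ℤ := (p:ℤ)^a with hc
  have hcne : c ≠ 0 := pow_ne_zero _ (by exact_mod_cast hp.ne_zero)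
  have hpdvdc : (p:ℤ) ∣ c := dvd_pow_self _ (by omega)
  rcases eq_or_lt_of_le (show 1 ≤ k from hk) with h1 | h2
  · -- k = 1
    rw [← h1, pow_one] at hpow
    have h0 : c • M = 0 := by
      have := congrArg (fun X => X - 1) hpow
      simpa using this
    have hentry : c * M i j = 0 := by
      have := congrFun (congrFun h0 i) j
      simpa using this
    rcases mul_eq_zero.mp hentry with h | h
    · exact absurd h hcne
    · simp [h]
  · -- k ≥ 2
    set q : ℕ := k.minFac with hqdef
    have hkne1 : k ≠ 1 := by omega
    have hqp : q.Prime := Nat.minFac_prime hkne1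
    have hqdvd : q ∣ k := Nat.minFac_dvd k
    set k' : ℕ := k / q with hk'def
    have hkeq : k = q * k' := (Nat.mul_div_cancel' hqdvd).symm
    have hk'lt : k' < k := Nat.div_lt_self hk hqp.one_lt
    have hk'pos : 0 < k' := Nat.div_pos (Nat.minFac_le hk) hqp.pos
    set T : Matrix ι ι ℤ :=
      ∑ x ∈ Finset.Ico 2 (q+1), ((q.choose x : ℤ) * c^(x-2)) • M^x with hT
    have hexp : (1 + c • M) ^ q = 1 + ((q : ℤ) * c) • M + (c^2) • T :=
      binom_expand c M q hqp.one_le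
    have hApow : ((1 + c • M) ^ q) ^ k' = 1 := by
      rw [← pow_mul, ← hkeq, hpow]
    by_cases hqeq : q = p
    · -- q = p : pass to exponent a+1
      have hdvdsum : ∀ i' j', (p:ℤ)^(a+2) ∣ ((c^2) • T) i' j' := by
        intro i' j'
        rw [Matrix.smul_apply, hT, Matrix.sum_apply, smul_eq_mul, Finset.mul_sum]
        refine Finset.dvd_sum fun x hx => ?_
        obtain ⟨hx2, hxq⟩ := Finset.mem_Ico.mp hx
        have hxlep : x ≤ p := by rw [← hqeq]; omega
        rw [Matrix.smul_apply, smul_eq_mul]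
        have hcc : c^2 * ((q.choose x : ℤ) * c^(x-2) * (M^x) i' j')
            = ((q.choose x : ℤ) * c^x) * (M^x) i' j' := by
          rw [show c^2 * ((q.choose x : ℤ) * c^(x-2) * (M^x) i' j')
              = (q.choose x : ℤ) * (c^2 * c^(x-2)) * (M^x) i' j' from by ring,
            ← pow_add, show 2 + (x-2) = x from by omega]
        rw [hcc]
        refine Dvd.dvd.mul_right ?_ _
        have hcx : c^x = (p:ℤ)^(a*x) := by rw [hc, ← pow_mul]
        rw [hcx]
        rcases eq_or_lt_of_le hxlep with hxp | hxp
        · -- x = p : p^(a*p), need a+2 ≤ a*p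
          have hap : a + 2 ≤ a * x := by
            subst hxp
            rcases Nat.eq_or_lt_of_le hp.two_le with h2p | h2p
            · have := ha2 h2p.symm; nlinarith
            · nlinarith
          exact Dvd.dvd.mul_left (pow_dvd_pow _ hap) _
        · -- x < p : p ∣ choose, and a+1 ≤ a*x
          have hch : (p:ℤ) ∣ (q.choose x : ℤ) := by
            have : p ∣ q.choose x := by
              rw [hqeq]
              exact hp.dvd_choose_self (by omega) hxp
            exact_mod_cast this
          have hax : a + 1 ≤ a * x := by nlinarith
          calc (p:ℤ)^(a+2) = (p:ℤ) * (p:ℤ)^(a+1) := by ring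
          _ ∣ (q.choose x : ℤ) * (p:ℤ)^(a*x) :=
            mul_dvd_mul hch (pow_dvd_pow _ hax)
      obtain ⟨U, hU⟩ := matrix_eq_smul_of_dvd ((p:ℤ)^(a+2)) _ hdvdsum
      have e1 : ((q:ℤ) * c) = (p:ℤ)^(a+1) := by
        rw [hc, hqeq, pow_succ']
      have hstep : (1 + c • M) ^ q = 1 + ((p:ℤ)^(a+1)) • (M + (p:ℤ) • U) := by
        rw [hexp, hU, e1, smul_add, smul_smul, ← pow_succ, add_assoc]
      rw [hstep] at hApow
      have hdvd := IH k' hk'lt hk'pos (a+1) (by omega) (fun _ => by omega) _ hApow i j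
      have hthis : (p:ℤ) ∣ M i j + (p:ℤ) * U i j := by
        have h := hdvd
        rw [Matrix.add_apply, Matrix.smul_apply, smul_eq_mul] at h
        exact h
      exact (dvd_add_left (dvd_mul_right _ (U i j))).mp hthis
    · -- q ≠ p
      have hM' : (1 + c • M) ^ q = 1 + c • ((q:ℤ) • M + c • T) := by
        rw [hexp, smul_add, smul_smul, smul_smul, mul_comm c (q:ℤ), sq, add_assoc]
      rw [hM'] at hApow
      have hdvd := IH k' hk'lt hk'pos a ha ha2 _ hApow i j
      have hsum : (p:ℤ) ∣ (q:ℤ) * M i j + c * T i j := by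
        have h := hdvd
        rw [Matrix.add_apply, Matrix.smul_apply, Matrix.smul_apply, smul_eq_mul, smul_eq_mul] at h
        exact h
      have hqM : (p:ℤ) ∣ (q:ℤ) * M i j :=
        (dvd_add_left (hpdvdc.mul_right (T i j))).mp hsum
      rcases (Int.Prime.dvd_mul' hp hqM) with h | h
      · exfalso
        have : p ∣ q := by exact_mod_cast h
        exact hqeq ((Nat.prime_dvd_prime_iff_eq hp hqp).mp this).symm
      · exact h

private lemma serre_zero {ι : Type*} [Fintype ι] [DecidableEq ι] {p : ℕ} (hp : p.Prime)
    {a : ℕ} (ha : 1 ≤ a) (ha2 : p = 2 → 2 ≤ a) (M : Matrix ι ι ℤ)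
    {k : ℕ} (hk : 0 < k) (hpow : (1 + ((p:ℤ)^a) • M) ^ k = 1) : M = 0 := by
  have hall : ∀ b : ℕ, ∀ i j, (p:ℤ)^b ∣ M i j := by
    intro b
    induction b with
    | zero => simp
    | succ b ihb =>
      obtain ⟨U, hU⟩ := matrix_eq_smul_of_dvd ((p:ℤ)^b) M ihb
      have hpow' : (1 + ((p:ℤ)^(a+b)) • U) ^ k = 1 := by
        rw [hU, smul_smul, ← pow_add] at hpow
        exact hpow
      have hstep := serre_step hp k hk (a+b) (by omega)
        (fun h => le_trans (ha2 h) (Nat.le_add_right a b)) U hpow'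
      intro i j
      rw [hU, Matrix.smul_apply, smul_eq_mul, pow_succ]
      exact mul_dvd_mul_left _ (hstep i j)
  ext i j
  by_contra hne
  have hb := hall ((M i j).natAbs) i j
  have hle : (p:ℤ)^((M i j).natAbs) ≤ |M i j| :=
    Int.le_of_dvd (abs_pos.mpr hne) ((dvd_abs _ _).mpr hb)
  have hlt : ((M i j).natAbs : ℤ) < (p:ℤ)^((M i j).natAbs) := by
    exact_mod_cast (Nat.lt_pow_self hp.one_lt : (M i j).natAbs < p ^ (M i j).natAbs)
  rw [Int.abs_eq_natAbs] at hle
  omega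

private lemma serre_one {ι : Type*} [Fintype ι] [DecidableEq ι]
    (m : ℤ) (hm : 3 ≤ m) (Dm : Matrix ι ι ℤ)
    {k : ℕ} (hk : 0 < k) (hpow : (1 + m • Dm) ^ k = 1) : (1 : Matrix ι ι ℤ) + m • Dm = 1 := by
  suffices h : m • Dm = 0 by rw [h, add_zero]
  by_cases h4 : (4:ℤ) ∣ m
  · obtain ⟨t, ht⟩ := h4
    have hrw : m • Dm = ((2:ℕ):ℤ)^2 • (t • Dm) := by
      rw [smul_smul, ht]; norm_num
    have hpow' : (1 + ((2:ℕ):ℤ)^2 • (t • Dm)) ^ k = 1 := by rw [← hrw]; exact hpow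
    have := serre_zero Nat.prime_two (by norm_num) (by norm_num) (t • Dm) hk hpow'
    rw [hrw, this, smul_zero]
  · -- odd part ≥ 3
    obtain ⟨o, ho1, ho2, ho3⟩ : ∃ o : ℤ, o ∣ m ∧ ¬ (2:ℤ) ∣ o ∧ 3 ≤ o := by
      by_cases h2 : (2:ℤ) ∣ m
      · obtain ⟨s, hs⟩ := h2
        refine ⟨s, Dvd.intro_left 2 hs.symm, ?_, ?_⟩
        · rintro ⟨u, hu⟩
          exact h4 ⟨u, by omega⟩
        ·
          by_contra hlt
          push_neg at hlt
          have : ¬ (2:ℤ) ∣ s := fun ⟨u, hu⟩ => h4 ⟨u, by omega⟩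
          omega
      · exact ⟨m, dvd_refl m, h2, hm⟩
    set p : ℕ := o.toNat.minFac with hpdef
    have honat : (o.toNat : ℤ) = o := Int.toNat_of_nonneg (by omega)
    have hone : o.toNat ≠ 1 := by omega
    have hp : p.Prime := Nat.minFac_prime hone
    have hpdvdo : (p:ℤ) ∣ o := by
      rw [← honat]
      exact_mod_cast o.toNat.minFac_dvd
    have hpne2 : p ≠ 2 := by
      intro h2
      apply ho2
      have : ((2:ℕ):ℤ) ∣ o := by rw [← h2]; exact hpdvdo
      exact_mod_cast this
    obtain ⟨t, ht⟩ := hpdvdo.trans ho1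
    have hrw : m • Dm = ((p:ℕ):ℤ)^1 • (t • Dm) := by
      rw [smul_smul, ht, pow_one]
    have hpow' : (1 + ((p:ℕ):ℤ)^1 • (t • Dm)) ^ k = 1 := by rw [← hrw]; exact hpow
    have := serre_zero hp (le_refl 1) (fun h => absurd h hpne2) (t • Dm) hk hpow'
    rw [hrw, this, smul_zero]

private lemma serre_end {HZ : Type*} [AddCommGroup HZ] [Module ℤ HZ] [Module.Free ℤ HZ]
    [Module.Finite ℤ HZ] (A : Module.End ℤ HZ) (m : ℤ) (hm : 3 ≤ m) (δ : Module.End ℤ HZ)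
    (hcong : A - 1 = m • δ) (k : ℕ) (hk : 0 < k) (hfin : A ^ k = 1) : A = 1 := by
  classical
  let b := Module.Free.chooseBasis ℤ HZ
  let e := LinearMap.toMatrixAlgEquiv b
  have hA : e A = 1 + m • (e δ) := by
    have : A = 1 + m • δ := by rw [← hcong]; abel
    rw [this, map_add, map_one, zsmul_eq_mul, map_mul, map_intCast, ← zsmul_eq_mul]
  have hpow : (1 + m • (e δ)) ^ k = 1 := by
    rw [← hA, ← map_pow, hfin, map_one]
  have h1 := serre_one m hm (e δ) hk hpow
  apply (LinearMap.toMatrix b b).injective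
  show e A = e 1
  rw [hA, h1, map_one]


private noncomputable def cexp2pi : ℂ := 2 * (Real.pi : ℂ) * Complex.I

private lemma cexp2pi_ne : cexp2pi ≠ 0 := by
  simp [cexp2pi, Real.pi_ne_zero, Complex.I_ne_zero]

private lemma im_div_cexp2pi (z : ℂ) : (z / cexp2pi).im = -z.re / (2 * Real.pi) := by
  simp [cexp2pi, Complex.div_im, Complex.normSq_apply]
  field_simp

private lemma phi_per {D : Type*} (Φ : ℂ → D) (h1 : ∀ z : ℂ, 0 < z.im → Φ (z + 1) = Φ z) :
    ∀ n : ℤ, ∀ z : ℂ, 0 < z.im → Φ (z + n) = Φ z := by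
  intro n
  induction n using Int.induction_on with
  | zero => simp
  | succ n ih =>
    intro z hz
    have him : 0 < (z + (n:ℤ)).im := by simp [Complex.add_im, hz]
    have : z + ((n:ℤ) + 1 : ℤ) = (z + (n:ℤ)) + 1 := by push_cast; ring
    rw [this, h1 _ him, ih z hz]
  | pred n ih =>
    intro z hz
    have him : 0 < (z + (-(n:ℤ) - 1 : ℤ)).im := by simp [Complex.add_im, hz]
    have key := h1 _ him
    have : z + (-(n:ℤ) - 1 : ℤ) + 1 = z + (-(n:ℤ) : ℤ) := by push_cast; ring
    rw [this] at key
    rw [← key]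
    exact ih z hz

private lemma phi_eq_of_exp_eq {D : Type*} (Φ : ℂ → D)
    (h1 : ∀ z : ℂ, 0 < z.im → Φ (z + 1) = Φ z)
    {z₁ z₂ : ℂ} (hz₁ : 0 < z₁.im) (hz₂ : 0 < z₂.im)
    (hexp : Complex.exp (cexp2pi * z₁) = Complex.exp (cexp2pi * z₂)) :
    Φ z₁ = Φ z₂ := by
  obtain ⟨n, hn⟩ := Complex.exp_eq_exp_iff_exists_int.mp hexp
  have : cexp2pi * z₁ = cexp2pi * (z₂ + n) := by
    rw [hn]; unfold cexp2pi; ring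
  have hz : z₁ = z₂ + n := mul_left_cancel₀ cexp2pi_ne this
  rw [hz]
  exact phi_per Φ h1 n z₂ hz₂

private noncomputable def fbranch (w : ℂ) : ℂ := Complex.log w / cexp2pi
private noncomputable def gbranch (w : ℂ) : ℂ := (Complex.log (-w) + Real.pi * Complex.I) / cexp2pi

private lemma fbranch_im {w : ℂ} (hw : w ≠ 0) (habs : ‖w‖ < 1) : 0 < (fbranch w).im := by
  rw [fbranch, im_div_cexp2pi, Complex.log_re]
  have h1 : Real.log (‖w‖) < 0 :=
    Real.log_neg (norm_pos_iff.mpr hw) habs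
  have h2 : (0:ℝ) < 2 * Real.pi := by positivity
  exact div_pos (by linarith) h2

private lemma fbranch_exp {w : ℂ} (hw : w ≠ 0) : Complex.exp (cexp2pi * fbranch w) = w := by
  rw [fbranch, mul_div_cancel₀ _ cexp2pi_ne, Complex.exp_log hw]

private lemma gbranch_im {w : ℂ} (hw : w ≠ 0) (habs : ‖w‖ < 1) : 0 < (gbranch w).im := by
  rw [gbranch, im_div_cexp2pi]
  have hre : (Complex.log (-w) + Real.pi * Complex.I).re = Real.log (‖w‖) := by
    simp [Complex.add_re, Complex.log_re]
  rw [hre]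
  have h1 : Real.log (‖w‖) < 0 :=
    Real.log_neg (norm_pos_iff.mpr hw) habs
  have h2 : (0:ℝ) < 2 * Real.pi := by positivity
  exact div_pos (by linarith) h2

private lemma gbranch_exp {w : ℂ} (hw : w ≠ 0) : Complex.exp (cexp2pi * gbranch w) = w := by
  rw [gbranch, mul_div_cancel₀ _ cexp2pi_ne, Complex.exp_add, Complex.exp_log (neg_ne_zero.mpr hw),
    Complex.exp_pi_mul_I]
  ring
/-- Let `Φ` be a continuous map from the upper half plane
`{z : ℂ | 0 < im z}` to a space `D`, and `γ` a group element acting on `D`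
with `Φ(z+1) = γ·Φ(z)`.  If `γ`, viewed (via a faithful monodromy
representation `ρ`) as an automorphism of a finitely generated free `ℤ`-module
preserving a bilinear form `Q`, satisfies `γ ≡ Id (mod m)` for some `m ≥ 3`
and has finite order, then `γ = Id` and `Φ` descends along
`z ↦ exp(2πiz)` to a map on the punctured disk (trivial monodromy). -/
theorem trivial_monodromy_descends {D : Type*} [TopologicalSpace D]
    {G : Type*} [Group G] [MulAction G D]
    {HZ : Type*} [AddCommGroup HZ] [Module ℤ HZ] [Module.Free ℤ HZ] [Module.Finite ℤ HZ]
    (Q : HZ →ₗ[ℤ] HZ →ₗ[ℤ] ℤ)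
    (ρ : G →* (Module.End ℤ HZ)ˣ) (hρ : Function.Injective ρ)
    (hQ : ∀ g : G, ∀ x y : HZ,
      Q ((ρ g : Module.End ℤ HZ) x) ((ρ g : Module.End ℤ HZ) y) = Q x y)
    (Φ : ℂ → D) (hΦ : ContinuousOn Φ {z : ℂ | 0 < z.im})
    (γ : G) (hper : ∀ z : ℂ, 0 < z.im → Φ (z + 1) = γ • Φ z)
    (m : ℤ) (hm : 3 ≤ m) (δ : Module.End ℤ HZ)
    (hcong : (ρ γ : Module.End ℤ HZ) - 1 = m • δ)
    (k : ℕ) (hk : 0 < k) (hfin : γ ^ k = 1) :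
    γ = 1 ∧
    ∃ Ψ : ℂ → D, ContinuousOn Ψ (Metric.ball (0 : ℂ) 1 \ {0}) ∧
      ∀ z : ℂ, 0 < z.im →
        Ψ (Complex.exp (2 * Real.pi * Complex.I * z)) = Φ z := by
  classical
  have hpowk : ((ρ γ : (Module.End ℤ HZ)ˣ) : Module.End ℤ HZ) ^ k = 1 := by
    have h2 : (ρ γ) ^ k = 1 := by rw [← map_pow, hfin, map_one]
    calc ((ρ γ : (Module.End ℤ HZ)ˣ) : Module.End ℤ HZ) ^ k
        = (((ρ γ) ^ k : (Module.End ℤ HZ)ˣ) : Module.End ℤ HZ) := by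
          rw [Units.val_pow_eq_pow_val]
      _ = 1 := by rw [h2, Units.val_one]
  have hend : ((ρ γ : (Module.End ℤ HZ)ˣ) : Module.End ℤ HZ) = 1 :=
    serre_end _ m hm δ hcong k hk hpowk
  have hγ : γ = 1 := by
    apply hρ
    rw [map_one]
    exact Units.ext (by rw [hend, Units.val_one])
  refine ⟨hγ, ?_⟩
  have h1 : ∀ z : ℂ, 0 < z.im → Φ (z + 1) = Φ z := by
    intro z hz
    rw [hper z hz, hγ, one_smul]
  set S := Metric.ball (0:ℂ) 1 \ {0} with hS
  have hSmem : ∀ w ∈ S, w ≠ 0 ∧ ‖w‖ < 1 := by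
    intro w hw
    obtain ⟨hb, hne⟩ := hw
    refine ⟨by simpa using hne, ?_⟩
    simpa [Complex.dist_eq] using Metric.mem_ball.mp hb
  have hmapsf : Set.MapsTo fbranch S {z : ℂ | 0 < z.im} :=
    fun w hw => fbranch_im (hSmem w hw).1 (hSmem w hw).2
  have hmapsg : Set.MapsTo gbranch S {z : ℂ | 0 < z.im} :=
    fun w hw => gbranch_im (hSmem w hw).1 (hSmem w hw).2
  refine ⟨Φ ∘ fbranch, ?_, ?_⟩
  · intro w hwS
    obtain ⟨hwne, hwabs⟩ := hSmem w hwS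
    by_cases hgood : 0 < w.re ∨ w.im ≠ 0
    · have hf : ContinuousAt fbranch w := (continuousAt_clog (Complex.mem_slitPlane_iff.mpr hgood)).div_const _
      exact (hΦ _ (hmapsf hwS)).comp hf.continuousWithinAt hmapsf
    · push_neg at hgood
      obtain ⟨hre, him⟩ := hgood
      have hreneg : 0 < (-w).re := by
        rcases lt_or_eq_of_le hre with h | h
        · simpa using h
        · exfalso
          apply hwne
          apply Complex.ext
          · simpa using h
          · simpa using him
      have hg : ContinuousAt gbranch w := by
        have hlog : ContinuousAt (fun v : ℂ => Complex.log (-v)) w :=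
          (continuousAt_clog (Complex.mem_slitPlane_iff.mpr (Or.inl hreneg))).comp continuous_neg.continuousAt
        exact (hlog.add continuousAt_const).div_const _
      have hcont : ContinuousWithinAt (Φ ∘ gbranch) S w :=
        (hΦ _ (hmapsg hwS)).comp hg.continuousWithinAt hmapsg
      have heq : ∀ y ∈ S, (Φ ∘ fbranch) y = (Φ ∘ gbranch) y := by
        intro y hy
        obtain ⟨hyne, hyabs⟩ := hSmem y hy
        exact phi_eq_of_exp_eq Φ h1 (fbranch_im hyne hyabs) (gbranch_im hyne hyabs)
          (by rw [fbranch_exp hyne, gbranch_exp hyne])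
      exact hcont.congr heq (heq w hwS)
  · intro z hz
    have hcw : (2 * (Real.pi:ℂ) * Complex.I * z) = cexp2pi * z := rfl
    set w := Complex.exp (2 * Real.pi * Complex.I * z) with hwdef
    have hwne : w ≠ 0 := Complex.exp_ne_zero _
    have habs : ‖w‖ < 1 := by
      rw [hwdef, Complex.norm_exp]
      apply Real.exp_lt_one_iff.mpr
      have hre : (2 * (Real.pi:ℂ) * Complex.I * z).re = -(2 * Real.pi * z.im) := by
        simp [Complex.mul_re, Complex.mul_im]
      rw [hre]
      have := Real.pi_pos
      nlinarith
    show Φ (fbranch w) = Φ z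
    refine phi_eq_of_exp_eq Φ h1 (fbranch_im hwne habs) hz ?_
    rw [fbranch_exp hwne, hwdef, hcw]
end
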